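/- For every unit vector ψ ∈ ℂ³ (i.e. |ψ₁|² + |ψ₂|² + |ψ₃|² = 1) there exist a phase φ ∈ ℝ, a rotation matrix R ∈ SO(3,ℝ), and a parameter t ∈ ℝ such that R applied (complex-linearly, entrywise with real entries) to e^{iφ}ψ equals the vector (cos t, i sin t, 0). -/

import Mathlib

open Complex

noncomputable section

/-- The cross product of two vectors in `ℝ³`. -/
def crossV (u v : Fin 3 → ℝ) : Fin 3 → ℝ :=
  ![u 1 * v 2 - u 2 * v 1, u 2 * v 0 - u 0 * v 2, u 0 * v 1 - u 1 * v 0]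

/-- The rotation matrix with rows `u`, `v`, `u × v`. -/
def rotM (u v : Fin 3 → ℝ) : Matrix (Fin 3) (Fin 3) ℝ :=
  Matrix.of ![u, v, crossV u v]

lemma exists_rot (u v : Fin 3 → ℝ) (c s : ℝ)
    (hu : u 0 ^ 2 + u 1 ^ 2 + u 2 ^ 2 = 1)
    (hv : v 0 ^ 2 + v 1 ^ 2 + v 2 ^ 2 = 1)
    (huv : u 0 * v 0 + u 1 * v 1 + u 2 * v 2 = 0)
    (χ : Fin 3 → ℂ)
    (hχ : ∀ k, χ k = ((c * u k : ℝ) : ℂ) + ((s * v k : ℝ) : ℂ) * Complex.I) :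
    ∃ R : Matrix (Fin 3) (Fin 3) ℝ,
      R.transpose * R = 1 ∧ R.det = 1 ∧
      (fun i => ∑ k, (R i k : ℂ) * χ k) = ![(c : ℂ), (s : ℂ) * Complex.I, 0] := by
  have huC : (u 0 : ℂ) ^ 2 + (u 1 : ℂ) ^ 2 + (u 2 : ℂ) ^ 2 = 1 := by exact_mod_cast hu
  have hvC : (v 0 : ℂ) ^ 2 + (v 1 : ℂ) ^ 2 + (v 2 : ℂ) ^ 2 = 1 := by exact_mod_cast hv
  have huvC : (u 0 : ℂ) * v 0 + (u 1 : ℂ) * v 1 + (u 2 : ℂ) * v 2 = 0 := by exact_mod_cast huv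
  refine ⟨rotM u v, ?_, ?_, ?_⟩
  · rw [mul_eq_one_comm]
    ext i j
    simp only [Matrix.mul_apply, Matrix.transpose_apply, Fin.sum_univ_three]
    fin_cases i <;> fin_cases j <;>
      simp [rotM, crossV, Matrix.one_apply] <;>
    first
      | linear_combination hu
      | linear_combination hv
      | linear_combination huv
      | linear_combination (v 0 ^ 2 + v 1 ^ 2 + v 2 ^ 2) * hu + hv
          - (u 0 * v 0 + u 1 * v 1 + u 2 * v 2) * huv
      | ring
  · rw [Matrix.det_fin_three]
    simp [rotM, crossV]
    linear_combination (v 0 ^ 2 + v 1 ^ 2 + v 2 ^ 2) * hu + hv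
      - (u 0 * v 0 + u 1 * v 1 + u 2 * v 2) * huv
  · funext i
    fin_cases i <;>
      simp [rotM, crossV, Fin.sum_univ_three, hχ 0, hχ 1, hχ 2] <;>
      push_cast <;>
    first
      | linear_combination c * huC + s * Complex.I * huvC
      | linear_combination c * huvC + s * Complex.I * hvC
      | ring

lemma exists_perp (x : Fin 3 → ℝ) :
    ∃ y : Fin 3 → ℝ, (y 0 ^ 2 + y 1 ^ 2 + y 2 ^ 2 = 1) ∧
      (x 0 * y 0 + x 1 * y 1 + x 2 * y 2 = 0) := by
  by_cases h : x 0 = 0 ∧ x 1 = 0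
  · exact ⟨![1, 0, 0], by show (1:ℝ) ^ 2 + 0 ^ 2 + 0 ^ 2 = 1; norm_num, by show x 0 * 1 + x 1 * 0 + x 2 * 0 = 0; simp [h.1]⟩
  · have hpos : 0 < x 0 ^ 2 + x 1 ^ 2 := by
      rcases not_and_or.mp h with h | h <;> positivity
    set r := Real.sqrt (x 0 ^ 2 + x 1 ^ 2) with hr
    have hr2 : r ^ 2 = x 0 ^ 2 + x 1 ^ 2 := Real.sq_sqrt hpos.le
    have hrpos : 0 < r := Real.sqrt_pos.mpr hpos
    refine ⟨![-x 1 / r, x 0 / r, 0], ?_, ?_⟩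
    · show (-x 1 / r) ^ 2 + (x 0 / r) ^ 2 + 0 ^ 2 = 1
      field_simp
      linarith [hr2]
    · show x 0 * (-x 1 / r) + x 1 * (x 0 / r) + x 2 * 0 = 0
      field_simp
      ring

set_option maxHeartbeats 1000000 in
/-- every unit vector in ℂ³ can be brought, by a phase and a rotation in
    SO(3) (acting complex-linearly), to the normal form (cos t, i sin t, 0). -/
theorem normal_form_spin_one_vector (ψ : Fin 3 → ℂ)
    (hψ : ‖ψ 0‖ ^ 2 + ‖ψ 1‖ ^ 2 + ‖ψ 2‖ ^ 2 = 1) :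
    ∃ (φ : ℝ) (R : Matrix (Fin 3) (Fin 3) ℝ) (t : ℝ),
      R.transpose * R = 1 ∧ R.det = 1 ∧
      (fun i => ∑ k, (R i k : ℂ) * (Complex.exp (φ * Complex.I) * ψ k)) =
        ![(Real.cos t : ℂ), (Real.sin t : ℂ) * Complex.I, 0] := by
  set z : ℂ := ψ 0 ^ 2 + ψ 1 ^ 2 + ψ 2 ^ 2 with hz
  set φ : ℝ := -z.arg / 2 with hφ
  set χ : Fin 3 → ℂ := fun k => Complex.exp ((φ : ℂ) * Complex.I) * ψ k with hχdef
  have h2φ : (2 * (φ : ℂ) * Complex.I) = -(z.arg : ℂ) * Complex.I := by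
    rw [hφ]; push_cast; ring
  have hkey : Complex.exp (2 * (φ : ℂ) * Complex.I) * z = ((‖z‖ : ℝ) : ℂ) := by
    rw [h2φ]
    conv_lhs => rw [← Complex.norm_mul_exp_arg_mul_I z]
    rw [mul_comm, mul_assoc, ← Complex.exp_add]
    simp
  have hexp2 : Complex.exp ((φ : ℂ) * Complex.I) ^ 2 = Complex.exp (2 * (φ : ℂ) * Complex.I) := by
    rw [sq, ← Complex.exp_add]; ring_nf
  have hsum : χ 0 ^ 2 + χ 1 ^ 2 + χ 2 ^ 2 = ((‖z‖ : ℝ) : ℂ) := by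
    simp only [hχdef]
    rw [mul_pow, mul_pow, mul_pow, ← mul_add, ← mul_add, hexp2, ← hz, hkey]
  have him0 : (χ 0 ^ 2 + χ 1 ^ 2 + χ 2 ^ 2).im = 0 := by rw [hsum]; simp
  simp only [pow_two, Complex.add_im, Complex.mul_im] at him0
  have hab : (χ 0).re * (χ 0).im + (χ 1).re * (χ 1).im + (χ 2).re * (χ 2).im = 0 := by
    linarith
  have habs : ∀ k : Fin 3, (χ k).re ^ 2 + (χ k).im ^ 2 = ‖ψ k‖ ^ 2 := by
    intro k
    have h1 : ‖χ k‖ = ‖ψ k‖ := by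
      simp [hχdef, map_mul, Complex.norm_exp_ofReal_mul_I]
    calc (χ k).re ^ 2 + (χ k).im ^ 2 = ‖χ k‖ ^ 2 := by
          rw [Complex.sq_norm, Complex.normSq_apply]; ring
      _ = ‖ψ k‖ ^ 2 := by rw [h1]
  set A : ℝ := (χ 0).re ^ 2 + (χ 1).re ^ 2 + (χ 2).re ^ 2 with hA
  set B : ℝ := (χ 0).im ^ 2 + (χ 1).im ^ 2 + (χ 2).im ^ 2 with hB
  have hAB : A + B = 1 := by
    have h0 := habs 0; have h1 := habs 1; have h2 := habs 2
    rw [hA, hB]; linarith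
  have hA0 : 0 ≤ A := by positivity
  have hB0 : 0 ≤ B := by positivity
  set c : ℝ := Real.sqrt A with hc
  set s : ℝ := Real.sqrt B with hs
  have hc2 : c ^ 2 = A := Real.sq_sqrt hA0
  have hs2 : s ^ 2 = B := Real.sq_sqrt hB0
  have hc0 : 0 ≤ c := Real.sqrt_nonneg _
  have hs0 : 0 ≤ s := Real.sqrt_nonneg _
  -- find suitable orthonormal pair u, v
  have main : ∃ (u v : Fin 3 → ℝ),
      (u 0 ^ 2 + u 1 ^ 2 + u 2 ^ 2 = 1) ∧ (v 0 ^ 2 + v 1 ^ 2 + v 2 ^ 2 = 1) ∧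
      (u 0 * v 0 + u 1 * v 1 + u 2 * v 2 = 0) ∧
      (∀ k, (χ k).re = c * u k) ∧ (∀ k, (χ k).im = s * v k) := by
    by_cases hAz : A = 0
    · -- all real parts vanish, B = 1, s = 1
      have hre : ∀ k : Fin 3, (χ k).re = 0 := by
        have hAz : (χ 0).re ^ 2 + (χ 1).re ^ 2 + (χ 2).re ^ 2 = 0 := by rw [← hA]; exact hAz
        have e0 : (χ 0).re = 0 := sq_eq_zero_iff.mp
          (by linarith [sq_nonneg ((χ 0).re), sq_nonneg ((χ 1).re), sq_nonneg ((χ 2).re)])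
        have e1 : (χ 1).re = 0 := sq_eq_zero_iff.mp
          (by linarith [sq_nonneg ((χ 0).re), sq_nonneg ((χ 1).re), sq_nonneg ((χ 2).re)])
        have e2 : (χ 2).re = 0 := sq_eq_zero_iff.mp
          (by linarith [sq_nonneg ((χ 0).re), sq_nonneg ((χ 1).re), sq_nonneg ((χ 2).re)])
        intro k
        fin_cases k
        · exact e0
        · exact e1
        · exact e2
      have hs1 : s = 1 := by
        rw [hs, show B = 1 by linarith [hAB, hAz]]; exact Real.sqrt_one
      set v : Fin 3 → ℝ := fun k => (χ k).im with hvdef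
      have hvu : v 0 ^ 2 + v 1 ^ 2 + v 2 ^ 2 = 1 := by
        rw [hvdef]; simp only; rw [← hB]; linarith [hAB, hAz]
      obtain ⟨u, hu1, hu2⟩ := exists_perp v
      refine ⟨u, v, hu1, hvu, by linarith [hu2], fun k => by rw [hre k, hc, hAz, Real.sqrt_zero, zero_mul], fun k => by rw [hs1, one_mul]⟩
    · by_cases hBz : B = 0
      · have him : ∀ k : Fin 3, (χ k).im = 0 := by
          have hBz : (χ 0).im ^ 2 + (χ 1).im ^ 2 + (χ 2).im ^ 2 = 0 := by rw [← hB]; exact hBz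
          have e0 : (χ 0).im = 0 := sq_eq_zero_iff.mp
            (by linarith [sq_nonneg ((χ 0).im), sq_nonneg ((χ 1).im), sq_nonneg ((χ 2).im)])
          have e1 : (χ 1).im = 0 := sq_eq_zero_iff.mp
            (by linarith [sq_nonneg ((χ 0).im), sq_nonneg ((χ 1).im), sq_nonneg ((χ 2).im)])
          have e2 : (χ 2).im = 0 := sq_eq_zero_iff.mp
            (by linarith [sq_nonneg ((χ 0).im), sq_nonneg ((χ 1).im), sq_nonneg ((χ 2).im)])
          intro k
          fin_cases k
          · exact e0
          · exact e1
          · exact e2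
        have hc1 : c = 1 := by
          rw [hc, show A = 1 by linarith [hAB, hBz]]; exact Real.sqrt_one
        set u : Fin 3 → ℝ := fun k => (χ k).re with hudef
        have huu : u 0 ^ 2 + u 1 ^ 2 + u 2 ^ 2 = 1 := by
          rw [hudef]; simp only; rw [← hA]; linarith [hAB, hBz]
        obtain ⟨v, hv1, hv2⟩ := exists_perp u
        refine ⟨u, v, huu, hv1, hv2, fun k => by rw [hc1, one_mul], fun k => by rw [him k, hs, hBz, Real.sqrt_zero, zero_mul]⟩
      · -- generic case
        have hcpos : 0 < c := Real.sqrt_pos.mpr (lt_of_le_of_ne hA0 (Ne.symm hAz))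
        have hspos : 0 < s := Real.sqrt_pos.mpr (lt_of_le_of_ne hB0 (Ne.symm hBz))
        refine ⟨fun k => (χ k).re / c, fun k => (χ k).im / s, ?_, ?_, ?_, ?_, ?_⟩
        · field_simp
          rw [hc2, hA]
        · field_simp
          rw [hs2, hB]
        · field_simp
          linear_combination hab
        · intro k; field_simp
        · intro k; field_simp
  obtain ⟨u, v, hu, hv, huv, hre, him⟩ := main
  have hχk : ∀ k, χ k = ((c * u k : ℝ) : ℂ) + ((s * v k : ℝ) : ℂ) * Complex.I := by
    intro k
    rw [← hre k, ← him k, Complex.re_add_im]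
  obtain ⟨R, hR1, hR2, hR3⟩ := exists_rot u v c s hu hv huv χ hχk
  have hs1 : s ≤ 1 := by rw [hs]; exact Real.sqrt_le_one.mpr (by linarith)
  have ht : Real.sin (Real.arcsin s) = s := Real.sin_arcsin (by linarith) hs1
  have htc : Real.cos (Real.arcsin s) = c := by
    rw [Real.cos_arcsin, hc]
    congr 1
    rw [hs2]; linarith
  refine ⟨φ, R, Real.arcsin s, hR1, hR2, ?_⟩
  rw [ht, htc]
  exact hR3
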